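/- For the almost-identical-firms system dqi/dt = qi(f - εi qi - Σ_{j≠i} qj), the function I1 = q3((ε1-1)q1 - (ε2-1)q2) / (q1((ε2-1)q2 - (ε3-1)q3)) is a first integral on the open set where the denominator is nonzero. -/

import Mathlib

theorem almost_identical_first_integral (f ε1 ε2 ε3 : ℝ) (q1 q2 q3 : ℝ → ℝ)
    (h1 : ∀ t, HasDerivAt q1 (q1 t * (f - ε1*q1 t - q2 t - q3 t)) t)
    (h2 : ∀ t, HasDerivAt q2 (q2 t * (f - q1 t - ε2*q2 t - q3 t)) t)
    (h3 : ∀ t, HasDerivAt q3 (q3 t * (f - q1 t - q2 t - ε3*q3 t)) t)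
    (t : ℝ) (hd : q1 t * ((ε2-1)*q2 t - (ε3-1)*q3 t) ≠ 0) :
    HasDerivAt (fun s => q3 s * ((ε1-1)*q1 s - (ε2-1)*q2 s) /
      (q1 s * ((ε2-1)*q2 s - (ε3-1)*q3 s))) 0 t := by
  have hN : HasDerivAt (fun s => q3 s * ((ε1-1)*q1 s - (ε2-1)*q2 s))
      ((q3 t * (f - q1 t - q2 t - ε3*q3 t)) * ((ε1-1)*q1 t - (ε2-1)*q2 t)
        + q3 t * ((ε1-1)*(q1 t * (f - ε1*q1 t - q2 t - q3 t))
          - (ε2-1)*(q2 t * (f - q1 t - ε2*q2 t - q3 t)))) t :=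
    (h3 t).mul (((h1 t).const_mul (ε1-1)).sub ((h2 t).const_mul (ε2-1)))
  have hD : HasDerivAt (fun s => q1 s * ((ε2-1)*q2 s - (ε3-1)*q3 s))
      ((q1 t * (f - ε1*q1 t - q2 t - q3 t)) * ((ε2-1)*q2 t - (ε3-1)*q3 t)
        + q1 t * ((ε2-1)*(q2 t * (f - q1 t - ε2*q2 t - q3 t))
          - (ε3-1)*(q3 t * (f - q1 t - q2 t - ε3*q3 t)))) t :=
    (h1 t).mul (((h2 t).const_mul (ε2-1)).sub ((h3 t).const_mul (ε3-1)))
  have h := hN.div hD hd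
  refine h.congr_deriv (Eq.symm ?_)
  rw [eq_div_iff (by positivity)]
  ring
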